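/- Let K be a field of characteristic zero with a derivation ∂ : K → K, let t ∈ K satisfy ∂t = 1, and let α ∈ K be a constant (∂α = 0) with α ≠ -1/2. Let z ∈ K be a solution of the second Painlevé equation P_II(α), i.e. ∂(∂z) = 2z³ + t·z + α (so that ∂z + z² + t/2 ≠ 0), and set w = T₊(z) = -z - (α + 1/2)/(∂z + z² + t/2). Then ∂w - w² - t/2 ≠ 0 and T₋ applied to w with parameter α + 1, namely -w + ((α + 1) - 1/2)/(∂w - w² - t/2), equals z. In particular the Bäcklund transformation T₊ defines a bijection from the set of solutions of P_II(α) in K onto the set of solutions of P_II(α + 1) in K, with inverse T₋. -/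

import Mathlib

section
variable {K : Type*} [Field K] [CharZero K] (D : Derivation ℚ K K)

lemma Dtwo : D (2:K) = 0 := by
  have : (2:K) = (1:K) + 1 := by norm_num
  rw [this]; simp

lemma Ddiv (a b : K) : D (a / b) = (D a * b - a * D b) / b ^ 2 := by
  rw [Derivation.leibniz_div]; simp [smul_eq_mul]; field_simp

lemma Dhalf : D (1/2 : K) = 0 := by
  rw [Ddiv, Dtwo]; simp

lemma Dsq (a : K) : D (a ^ 2) = 2 * a * D a := by
  rw [pow_two, Derivation.leibniz]; simp [smul_eq_mul]; ring

/-- forward step -/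
lemma fwd (t α u : K) (ht : D t = 1) (hα : D α = 0) (hc : α + 1/2 ≠ 0)
    (hu : D (D u) = 2 * u ^ 3 + t * u + α) :
    D u + u ^ 2 + t / 2 ≠ 0 ∧
    (∀ w, w = -u - (α + 1/2) / (D u + u ^ 2 + t / 2) →
      D w - w ^ 2 - t / 2 = -(D u + u ^ 2 + t / 2) ∧
      D (D w) = 2 * w ^ 3 + t * w + (α + 1)) := by
  have hDt2 : D (t/2) = 1/2 := by rw [Ddiv, Dtwo, ht]; norm_num
  set s := D u + u ^ 2 + t / 2 with hsdef
  clear_value s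
  have hDu : D u = s - u ^ 2 - t/2 := by rw [hsdef]; ring
  have hDs : D s = 2 * u * s + (α + 1/2) := by
    rw [hsdef, D.map_add, D.map_add, hu, Dsq, hDt2, hDu]
    ring
  have hs : s ≠ 0 := by
    intro h
    have h0 : D s = 0 := by rw [h]; simp
    rw [hDs, h] at h0
    apply hc; linear_combination h0
  refine ⟨hs, fun w hw => ?_⟩
  have hDc : D (α + 1/2 : K) = 0 := by rw [D.map_add, hα, Dhalf]; simp
  have hDw : D w = -D u + (α + 1/2) * D s / s ^ 2 := by
    rw [hw, D.map_sub, D.map_neg, Ddiv, hDc]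
    ring
  have key : D w - w ^ 2 - t / 2 = -s := by
    rw [hDw, hw, hDs, hDu]
    field_simp
    have h1 : s * s⁻¹ = 1 := mul_inv_cancel₀ hs
    ring
  refine ⟨key, ?_⟩
  have hDw' : D w = w ^ 2 + t / 2 - s := by linear_combination key
  have hDDw : D (D w) = 2 * w * D w + 1/2 - D s := by
    rw [hDw', D.map_sub, D.map_add, Dsq, hDt2, hDw']
  have hwv : w * s = -u * s - (α + 1/2) := by
    rw [hw]; field_simp
  rw [hDDw, hDw', hDs]
  linear_combination (-2 : K) * hwv

end

section
variable {K : Type*} [Field K] [CharZero K] (D : Derivation ℚ K K)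

/-- backward step, derived from `fwd` by the symmetry `v ↦ -v`, `β ↦ -β`. -/
lemma bwd (t β v : K) (ht : D t = 1) (hβ : D β = 0) (hc : β - 1/2 ≠ 0)
    (hv : D (D v) = 2 * v ^ 3 + t * v + β) :
    D v - v ^ 2 - t / 2 ≠ 0 ∧
    (∀ u, u = -v + (β - 1/2) / (D v - v ^ 2 - t / 2) →
      D u + u ^ 2 + t / 2 = -(D v - v ^ 2 - t / 2) ∧
      D (D u) = 2 * u ^ 3 + t * u + (β - 1)) := by
  obtain ⟨hs, h2⟩ := fwd D t (-β) (-v) ht (by rw [D.map_neg, hβ, neg_zero])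
    (fun h => hc (by linear_combination -h))
    (by rw [D.map_neg, D.map_neg, hv]; ring)
  have hr : D v - v ^ 2 - t / 2 ≠ 0 := by
    intro h
    apply hs
    rw [D.map_neg]
    linear_combination -h
  refine ⟨hr, fun u hu => ?_⟩
  obtain ⟨c1, c2⟩ := h2 (-u) (by
    rw [hu, D.map_neg,
      show (-β + 1/2 : K) = -(β - 1/2) from by ring,
      show -D v + (-v) ^ 2 + t/2 = -(D v - v ^ 2 - t/2) from by ring,
      neg_div_neg_eq]
    ring)
  simp only [map_neg] at c1 c2
  constructor
  · linear_combination -c1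
  · linear_combination -c2

end

/-- For `α ≠ -1/2` and `z` a solution of `P_II(α)`, the denominator
of `T₊` does not vanish at `z`; setting `w = T₊(z)`, the denominator of `T₋`
(with parameter `α + 1`) does not vanish at `w` and `T₋(w) = z`.  In particular
`T₊` is a bijection from the solution set of `P_II(α)` in `K` onto the solution
set of `P_II(α + 1)` in `K`, with inverse `T₋`. -/
theorem PII_Tplus_bijection {K : Type*} [Field K] [CharZero K]
    (D : Derivation ℚ K K) (t α z w : K)
    (ht : D t = 1) (hα : D α = 0) (hαne : α ≠ -(1 / 2))
    (hz : D (D z) = 2 * z ^ 3 + t * z + α)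
    (hw : w = -z - (α + 1 / 2) / (D z + z ^ 2 + t / 2)) :
    D z + z ^ 2 + t / 2 ≠ 0 ∧
    D w - w ^ 2 - t / 2 ≠ 0 ∧
    -w + ((α + 1) - 1 / 2) / (D w - w ^ 2 - t / 2) = z ∧
    Set.BijOn (fun u => -u - (α + 1 / 2) / (D u + u ^ 2 + t / 2))
      {u | D (D u) = 2 * u ^ 3 + t * u + α}
      {u | D (D u) = 2 * u ^ 3 + t * u + (α + 1)} := by
  have hc : α + 1/2 ≠ 0 := fun h => hαne (by linear_combination h)
  -- roundtrip: for any solution u of P_II(α), T₋(T₊ u) = u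
  have roundtrip : ∀ u : K, D (D u) = 2 * u ^ 3 + t * u + α →
      ∀ v, v = -u - (α + 1/2) / (D u + u ^ 2 + t / 2) →
      -v + (α + 1/2) / (D v - v ^ 2 - t / 2) = u := by
    intro u hu v hv
    obtain ⟨hs, hstep⟩ := fwd D t α u ht hα hc hu
    obtain ⟨key, _⟩ := hstep v hv
    rw [key, div_neg, hv]
    ring
  obtain ⟨hs, hstep⟩ := fwd D t α z ht hα hc hz
  obtain ⟨key, hwsol⟩ := hstep w hw
  refine ⟨hs, ?_, ?_, ?_, ?_, ?_⟩
  · rw [key]; exact neg_ne_zero.mpr hs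
  · rw [show ((α + 1) - 1/2 : K) = α + 1/2 from by ring]
    exact roundtrip z hz w hw
  · -- MapsTo
    intro u hu
    obtain ⟨_, hstep'⟩ := fwd D t α u ht hα hc hu
    exact (hstep' _ rfl).2
  · -- InjOn
    intro a ha b hb hab
    have ra := roundtrip a ha _ rfl
    have rb := roundtrip b hb _ rfl
    simp only [Set.mem_setOf_eq] at *
    rw [← ra, ← rb]
    rw [show (-a - (α + 1/2) / (D a + a ^ 2 + t/2)) =
        (-b - (α + 1/2) / (D b + b ^ 2 + t/2)) from hab]
  · -- SurjOn
    intro v hv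
    simp only [Set.mem_setOf_eq] at hv
    obtain ⟨hr, hstep'⟩ := bwd D t (α + 1) v ht (by rw [D.map_add, hα]; simp)
      (fun h => hc (by linear_combination h)) hv
    obtain ⟨c1, c2⟩ := hstep' (-v + ((α + 1) - 1/2) / (D v - v ^ 2 - t / 2)) rfl
    refine ⟨-v + ((α + 1) - 1/2) / (D v - v ^ 2 - t / 2), ?_, ?_⟩
    · simp only [Set.mem_setOf_eq]
      rw [c2]; ring
    · show -(-v + ((α + 1) - 1/2) / (D v - v ^ 2 - t / 2)) -
        (α + 1/2) / (D (-v + ((α + 1) - 1/2) / (D v - v ^ 2 - t / 2)) +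
          (-v + ((α + 1) - 1/2) / (D v - v ^ 2 - t / 2)) ^ 2 + t / 2) = v
      rw [c1, div_neg]
      ring
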